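/- Let n ≥ 3 and k ∈ ℝ, and define u : ℝⁿ → ℝ by u(x) = k·x₁. Then G_{n−1}(A^u(x)) = 0 for every x ∈ ℝⁿ, while |∇u(x)| = |k|. Consequently, for p = n−1 there is no local gradient estimate of the form |∇u|² ≤ C(1 + e^{−2 inf u}) for solutions of G_{n−1}(A^u) = e^{−2u}·f with f ≡ 0: the functions u_k(x) = k·x₁ are nonnegative on the half-space {x₁ ≥ 0} but have unbounded gradients as k → ∞. -/

import Mathlib

open Matrix Metric Real

noncomputable section

attribute [local instance] Matrix.normedAddCommGroup Matrix.normedSpace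

/-- The `i`-th partial derivative of `u` at `x`. -/
def pd {n : ℕ} (u : EuclideanSpace ℝ (Fin n) → ℝ) (x : EuclideanSpace ℝ (Fin n)) (i : Fin n) : ℝ :=
  fderiv ℝ u x (EuclideanSpace.single i 1)

/-- The Hessian matrix `∇²u(x)`. -/
def hessian {n : ℕ} (u : EuclideanSpace ℝ (Fin n) → ℝ) (x : EuclideanSpace ℝ (Fin n)) :
    Matrix (Fin n) (Fin n) ℝ :=
  Matrix.of fun i j => pd (fun y => pd u y j) x i

/-- The conformal Schouten matrix `A^u(x) = ∇²u + ∇u ⊗ ∇u − (|∇u|²/2)·Iₙ`. -/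
def schouten {n : ℕ} (u : EuclideanSpace ℝ (Fin n) → ℝ) (x : EuclideanSpace ℝ (Fin n)) :
    Matrix (Fin n) (Fin n) ℝ :=
  hessian u x + Matrix.of (fun i j => pd u x i * pd u x j)
    - ((∑ i, (pd u x i) ^ 2) / 2) • (1 : Matrix (Fin n) (Fin n) ℝ)

/-- Eigenvalues of a symmetric matrix, sorted in nondecreasing order. -/
def sortedEig {n : ℕ} (A : Matrix (Fin n) (Fin n) ℝ) (hA : A.IsHermitian) : Fin n → ℝ :=
  hA.eigenvalues ∘ Tuple.sort hA.eigenvalues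

/-- `G_p(A) = (n−p)·(λ₁+⋯+λ_p) + p·(λ_{p+1}+⋯+λₙ)` (junk value `0` on non-symmetric input). -/
def Gp {n : ℕ} (p : ℕ) (A : Matrix (Fin n) (Fin n) ℝ) : ℝ :=
  if hA : A.IsHermitian then
    ∑ i : Fin n, (if (i : ℕ) < p then ((n : ℝ) - p) else (p : ℝ)) * sortedEig A hA i
  else 0

/-- Operator norm of a matrix, acting on Euclidean space. -/
def opNorm {n : ℕ} (A : Matrix (Fin n) (Fin n) ℝ) : ℝ :=
  ‖LinearMap.toContinuousLinearMap (Matrix.toEuclideanLin A)‖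

/-- `F` is uniformly elliptic with ellipticity constants `0 < l ≤ L`. -/
def UniformlyElliptic {n : ℕ} (F : Matrix (Fin n) (Fin n) ℝ → ℝ) (l L : ℝ) : Prop :=
  0 < l ∧ l ≤ L ∧
    ∀ W N : Matrix (Fin n) (Fin n) ℝ, W.IsHermitian → N.PosSemidef →
      l * opNorm N ≤ F (W + N) - F W ∧ F (W + N) - F W ≤ L * opNorm N

/-- `F` is concave on the space of symmetric matrices. -/
def ConcaveOnSym {n : ℕ} (F : Matrix (Fin n) (Fin n) ℝ → ℝ) : Prop :=
  ∀ A B : Matrix (Fin n) (Fin n) ℝ, A.IsHermitian → B.IsHermitian →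
    ∀ t : ℝ, 0 ≤ t → t ≤ 1 → t * F A + (1 - t) * F B ≤ F (t • A + (1 - t) • B)


lemma my_eig_sq {m : ℕ} {A : Matrix (Fin m) (Fin m) ℝ} (hA : A.IsHermitian) (a : ℝ)
    (hAA : A * A = (a^2) • (1 : Matrix (Fin m) (Fin m) ℝ)) (i : Fin m) :
    hA.eigenvalues i ^ 2 = a ^ 2 := by
  set v := ⇑(hA.eigenvectorBasis i) with hvdef
  have hv : A *ᵥ v = hA.eigenvalues i • v := hA.mulVec_eigenvectorBasis i
  have h2 : A *ᵥ (A *ᵥ v) = (hA.eigenvalues i ^ 2) • v := by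
    rw [hv, Matrix.mulVec_smul, hv, smul_smul, sq]
  have h3 : A *ᵥ (A *ᵥ v) = (a ^ 2) • v := by
    rw [Matrix.mulVec_mulVec, hAA, Matrix.smul_mulVec, Matrix.one_mulVec]
  have hvne : v ≠ 0 := by
    intro h
    exact hA.eigenvectorBasis.orthonormal.ne_zero i (by ext j; exact congrFun h j)
  have h4 : (hA.eigenvalues i ^ 2 - a ^ 2) • v = 0 := by
    rw [sub_smul, ← h2, ← h3, sub_self]
  rcases smul_eq_zero.mp h4 with h | h
  · linarith [sub_eq_zero.mp (by linarith [h] : hA.eigenvalues i ^ 2 - a ^ 2 = 0)]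
  · exact absurd h hvne

lemma my_trace {m : ℕ} {A : Matrix (Fin m) (Fin m) ℝ} (hA : A.IsHermitian) :
    ∑ i, hA.eigenvalues i = A.trace := by
  nth_rewrite 2 [hA.spectral_theorem]
  rw [Unitary.conjStarAlgAut_apply, Matrix.trace_mul_cycle]
  rw [show (star (hA.eigenvectorUnitary : Matrix (Fin m) (Fin m) ℝ)) *
    (hA.eigenvectorUnitary : Matrix (Fin m) (Fin m) ℝ) = 1 from Unitary.coe_star_mul_self _,
    one_mul]
  simp [Matrix.trace_diagonal]

/-- **No local gradient estimate for `p = n−1`**: the linear functions `u(x) = k·x₁` satisfy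
`G_{n−1}(A^u) ≡ 0` (i.e. the equation with `f ≡ 0`) with `|∇u| ≡ |k|`; for `k ≥ 0` they are
nonnegative on the half-space `{x₁ ≥ 0}` while their gradients are unbounded as `k → ∞`. -/
theorem no_gradient_estimate_p_eq_n_sub_one (n : ℕ) (hn : 3 ≤ n) (k : ℝ)
    (u : EuclideanSpace ℝ (Fin n) → ℝ)
    (hu : ∀ x, u x = k * x ⟨0, by omega⟩) :
    (∀ x, Gp (n - 1) (schouten u x) = 0) ∧
    (∀ x, ‖fderiv ℝ u x‖ = |k|) ∧
    (0 ≤ k → ∀ x : EuclideanSpace ℝ (Fin n), 0 ≤ x ⟨0, by omega⟩ → 0 ≤ u x) := by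
  set e0 : Fin n := ⟨0, by omega⟩ with he0
  set v0 : EuclideanSpace ℝ (Fin n) := EuclideanSpace.single e0 1 with hv0
  set φ : EuclideanSpace ℝ (Fin n) →L[ℝ] ℝ := k • innerSL ℝ v0 with hφ
  have huφ : u = ⇑φ := by
    funext x
    simp [hu x, hφ, hv0, EuclideanSpace.inner_single_left, he0]
  have hfd : ∀ x, fderiv ℝ u x = φ := by
    intro x; rw [huφ]; exact φ.fderiv
  have hpd : ∀ x i, pd u x i = if i = e0 then k else 0 := by
    intro x i
    rw [pd, hfd]
    simp only [hφ, hv0, ContinuousLinearMap.smul_apply, innerSL_apply_apply,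
      EuclideanSpace.inner_single_left, _root_.map_one, one_mul, EuclideanSpace.single_apply,
      smul_eq_mul]
    by_cases h : i = e0
    · simp [h]
    · simp [h, Ne.symm h]
  set a : ℝ := k ^ 2 / 2 with ha
  set d : Fin n → ℝ := fun i => if i = e0 then a else -a with hd
  have hsch : ∀ x, schouten u x = Matrix.diagonal d := by
    intro x
    have hhess : hessian u x = 0 := by
      ext i j
      show pd (fun y => pd u y j) x i = 0
      rw [pd, show (fun y => pd u y j) = fun _ => (if j = e0 then k else 0) from
        funext fun y => hpd y j, fderiv_fun_const]
      simp
    have hsum : (∑ i, (pd u x i) ^ 2) = k ^ 2 := by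
      calc (∑ i, (pd u x i) ^ 2) = ∑ i, (if i = e0 then k ^ 2 else 0) := by
            refine Finset.sum_congr rfl fun i _ => by rw [hpd]; split_ifs <;> ring
        _ = k ^ 2 := by simp
    rw [schouten, hhess, hsum]
    ext i j
    simp only [Matrix.add_apply, Matrix.sub_apply, Matrix.zero_apply, Matrix.of_apply,
      Matrix.smul_apply, Matrix.one_apply, Matrix.diagonal_apply, hpd, smul_eq_mul, hd]
    by_cases hij : i = j
    · subst hij; by_cases h : i = e0 <;> simp [h, ha] <;> ring
    · simp only [if_neg hij]
      by_cases h : i = e0 <;> by_cases h' : j = e0 <;> simp [h, h', hij] <;> ring_nf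
      · exact absurd (h.trans h'.symm) hij
  have hdh : (Matrix.diagonal d).IsHermitian := Matrix.isHermitian_diagonal d
  have ha0 : 0 ≤ a := by positivity
  have hd2 : ∀ i, d i ^ 2 = a ^ 2 := by
    intro i; rcases eq_or_ne i e0 with h | h <;> simp [hd, h, neg_sq]
  have hAA : Matrix.diagonal d * Matrix.diagonal d =
      (a ^ 2) • (1 : Matrix (Fin n) (Fin n) ℝ) := by
    rw [Matrix.diagonal_mul_diagonal]
    ext i j
    simp only [Matrix.diagonal_apply, Matrix.smul_apply, Matrix.one_apply, smul_eq_mul]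
    by_cases hij : i = j
    · simp [hij, ← sq, hd2]
    · simp [hij]
  have heig2 : ∀ i, hdh.eigenvalues i ^ 2 = a ^ 2 := my_eig_sq hdh a hAA
  have heigor : ∀ i, hdh.eigenvalues i = a ∨ hdh.eigenvalues i = -a := by
    intro i
    have h : (hdh.eigenvalues i - a) * (hdh.eigenvalues i + a) = 0 := by
      have := heig2 i; ring_nf; ring_nf at this; linarith
    rcases mul_eq_zero.mp h with h | h
    · left; linarith
    · right; linarith
  have htr : ∑ i, hdh.eigenvalues i = 2 * a - n * a := by
    rw [my_trace hdh, Matrix.trace_diagonal]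
    calc ∑ i, d i = ∑ i : Fin n, (-a + if i = e0 then 2 * a else 0) := by
          refine Finset.sum_congr rfl fun i _ => by
            rcases eq_or_ne i e0 with h | h <;> simp [hd, h] <;> ring
      _ = 2 * a - n * a := by
          rw [Finset.sum_add_distrib, Finset.sum_const, Finset.sum_ite_eq' Finset.univ e0]
          simp [Finset.card_univ]
          ring
  refine ⟨?_, ?_, ?_⟩
  · intro x
    rw [hsch x, Gp, dif_pos hdh]
    set σ := Tuple.sort hdh.eigenvalues with hσ
    set μ : Fin n → ℝ := hdh.eigenvalues ∘ σ with hμ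
    have hμs : sortedEig (Matrix.diagonal d) hdh = μ := rfl
    have hμsum : ∑ i, μ i = 2 * a - n * a := by
      rw [hμ, ← htr]; exact Equiv.sum_comp σ hdh.eigenvalues
    have hμor : ∀ i, μ i = a ∨ μ i = -a := fun i => heigor (σ i)
    have hmono : Monotone μ := Tuple.monotone_sort hdh.eigenvalues
    set last : Fin n := ⟨n - 1, by omega⟩ with hlast
    have hμlast : μ last = a := by
      by_cases haz : a = 0
      · rcases hμor last with h | h <;> simp [h, haz]
      · have hapos : 0 < a := lt_of_le_of_ne ha0 (Ne.symm haz)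
        have hex : ∃ i, μ i = a := by
          by_contra hne
          push_neg at hne
          have : ∀ i, μ i = -a := fun i => (hμor i).resolve_left (hne i)
          have hs : ∑ i, μ i = n * (-a) := by
            rw [Finset.sum_congr rfl fun i _ => this i, Finset.sum_const]
            simp [Finset.card_univ]
          rw [hμsum] at hs
          have hn3 : (3 : ℝ) ≤ n := by exact_mod_cast hn
          nlinarith
        obtain ⟨i0, hi0⟩ := hex
        have hle : i0 ≤ last := by
          have := i0.2; rw [Fin.le_def]; simp only [hlast]; omega
        have := hmono hle
        rw [hi0] at this
        rcases hμor last with h | h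
        · exact h
        · rw [h] at this; linarith
    rw [hμs]
    have hstep : ∀ i : Fin n,
        (if (i : ℕ) < n - 1 then ((n : ℝ) - (n - 1 : ℕ)) else ((n - 1 : ℕ) : ℝ)) * μ i
        = μ i + (if i = last then ((n : ℝ) - 2) * μ i else 0) := by
      intro i
      have hcast : ((n - 1 : ℕ) : ℝ) = (n : ℝ) - 1 := by
        rw [Nat.cast_sub (by omega)]; simp
      by_cases h : i = last
      · have : ¬ ((i : ℕ) < n - 1) := by subst h; simp [hlast]
        rw [if_neg this, if_pos h, hcast]; ring
      · have hi : (i : ℕ) < n - 1 := by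
          have h2 := i.2
          have : (i : ℕ) ≠ n - 1 := fun hc => h (by rw [hlast]; exact Fin.ext hc)
          omega
        rw [if_pos hi, if_neg h, hcast]; ring
    rw [Finset.sum_congr rfl fun i _ => hstep i, Finset.sum_add_distrib,
      Finset.sum_ite_eq' Finset.univ last]
    simp only [Finset.mem_univ, if_pos]
    rw [hμsum, hμlast]
    ring
  · intro x
    rw [hfd, hφ, norm_smul, innerSL_apply_norm, hv0, EuclideanSpace.norm_single]
    simp [Real.norm_eq_abs]
  · intro hk x hx
    rw [hu]
    exact mul_nonneg hk hx


end
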